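/- For every u ∈ W', every d ∈ W, and every λ ∈ V_ℂ such that α̂(λ) ≠ 0 and ρ(α̂(λ)) ≠ 0 for every coroot α̂ ∈ R̂, the following identity holds: c'(udλ) · r(udλ)/r(λ) = ∏_{α̂ ∈ d⁻¹(R̂(u))} (α̂(λ) − 1)/α̂(λ) · ∏_{β̂ ∈ d⁻¹(R̂'_+ ∖ R̂(u))} (β̂(λ) + 1)/β̂(λ) · ∏_{γ̂ ∈ R̂(ud)} ρ(γ̂(λ) + 1)/ρ(γ̂(λ)). (Here for u ∈ W' the inversion set R̂(u) is automatically contained in R̂'_+.) -/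

import Mathlib

open scoped RealInnerProductSpace Classical

/-- A reduced crystallographic root system in `V = EuclideanSpace ℝ (Fin n)`, with a fixed
positive system and base `Δ` of simple roots.  `W` acts on `V`, hence on coroots, and is
extended complex-linearly to the complexification `V_ℂ = Fin n → ℂ`. -/
structure RootData (n : ℕ) where
  roots : Finset (EuclideanSpace ℝ (Fin n))
  pos : Finset (EuclideanSpace ℝ (Fin n))
  simples : Finset (EuclideanSpace ℝ (Fin n))
  pos_subset : pos ⊆ roots
  simples_subset : simples ⊆ pos
  ne_zero : ∀ a ∈ roots, a ≠ 0
  union_eq : roots = pos ∪ pos.image (fun a => -a)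
  pos_neg_disj : ∀ a ∈ pos, -a ∉ pos
  reduced : ∀ a ∈ roots, ∀ t : ℝ, t • a ∈ roots → t = 1 ∨ t = -1
  crystallographic : ∀ a ∈ roots, ∀ b ∈ roots, ∃ k : ℤ, 2 * ⟪a, b⟫ / ⟪a, a⟫ = (k : ℝ)
  refl_mem : ∀ a ∈ roots, ∀ b ∈ roots, b - (2 * ⟪a, b⟫ / ⟪a, a⟫) • a ∈ roots
  simples_indep : LinearIndependent ℝ (fun a : {x // x ∈ simples} => (a : EuclideanSpace ℝ (Fin n)))
  pos_comb : ∀ b ∈ pos, ∃ c : EuclideanSpace ℝ (Fin n) → ℕ, b = ∑ a ∈ simples, (c a : ℝ) • a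

namespace RootData

variable {n : ℕ}

/-- The Weyl group `W`, generated by the orthogonal reflections in the roots. -/
noncomputable def weyl (S : RootData n) :
    Subgroup (EuclideanSpace ℝ (Fin n) ≃ₗ[ℝ] EuclideanSpace ℝ (Fin n)) :=
  Subgroup.closure {g | ∃ a ∈ S.roots, ∀ v, g v = v - (2 * ⟪a, v⟫ / ⟪a, a⟫) • a}

/-- The coroot `α̂ := 2α/(α,α)` of a root `α`. -/
noncomputable def co (a : EuclideanSpace ℝ (Fin n)) : EuclideanSpace ℝ (Fin n) :=
  (2 / ⟪a, a⟫) • a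

/-- Evaluation of a coroot (as a linear functional via the inner product), extended
`ℂ`-linearly to the complexification `V_ℂ = Fin n → ℂ`. -/
noncomputable def ev (a : EuclideanSpace ℝ (Fin n)) (l : Fin n → ℂ) : ℂ :=
  ∑ i, (a i : ℂ) * l i

/-- The `ℂ`-linear extension of `w : V ≃ₗ[ℝ] V` to the complexification `V_ℂ`. -/
noncomputable def cpx (w : EuclideanSpace ℝ (Fin n) ≃ₗ[ℝ] EuclideanSpace ℝ (Fin n))
    (l : Fin n → ℂ) : Fin n → ℂ :=
  fun i => ∑ j, ((w (EuclideanSpace.single j 1)) i : ℂ) * l j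

/-- The inversion set `R̂(w) = {α̂ ∈ R̂₊ : w(α̂) ∈ R̂₋}` (indexed by the positive roots
`α` with `w(α)` negative, which correspond bijectively to the coroots in question). -/
noncomputable def invSet (S : RootData n)
    (w : EuclideanSpace ℝ (Fin n) ≃ₗ[ℝ] EuclideanSpace ℝ (Fin n)) :
    Finset (EuclideanSpace ℝ (Fin n)) :=
  S.pos.filter fun a => w a ∈ S.pos.image (fun b => -b)

/-- `r(λ) := ∏_{α ∈ R₊} ρ(α̂(λ))`. -/
noncomputable def rfun (S : RootData n) (ρ : ℂ → ℂ) (l : Fin n → ℂ) : ℂ :=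
  ∏ a ∈ S.pos, ρ (ev (co a) l)

/-- The standard Levi subsystem `R'` determined by a subset `J ⊆ Δ`: the roots lying in the
span of `J`. -/
noncomputable def leviRoots (S : RootData n) (J : Finset (EuclideanSpace ℝ (Fin n))) :
    Finset (EuclideanSpace ℝ (Fin n)) :=
  S.roots.filter fun b => b ∈ Submodule.span ℝ (J : Set (EuclideanSpace ℝ (Fin n)))

/-- `R'₊`, the positive part of the standard Levi subsystem. -/
noncomputable def leviPos (S : RootData n) (J : Finset (EuclideanSpace ℝ (Fin n))) :
    Finset (EuclideanSpace ℝ (Fin n)) :=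
  S.pos ∩ leviRoots S J

/-- The Weyl group `W'` of the standard Levi subsystem. -/
noncomputable def leviWeyl (S : RootData n) (J : Finset (EuclideanSpace ℝ (Fin n))) :
    Subgroup (EuclideanSpace ℝ (Fin n) ≃ₗ[ℝ] EuclideanSpace ℝ (Fin n)) :=
  Subgroup.closure {g | ∃ a ∈ leviRoots S J, ∀ v, g v = v - (2 * ⟪a, v⟫ / ⟪a, a⟫) • a}

/-- `c'(λ) := ∏_{α ∈ R'₊} (α̂(λ) + 1)/α̂(λ)`. -/
noncomputable def cfunLevi (S : RootData n) (J : Finset (EuclideanSpace ℝ (Fin n)))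
    (l : Fin n → ℂ) : ℂ :=
  ∏ a ∈ leviPos S J, (ev (co a) l + 1) / ev (co a) l

variable {S : RootData n} {J : Finset (EuclideanSpace ℝ (Fin n))}

lemma inner_sq_ne {a : EuclideanSpace ℝ (Fin n)} (ha : a ≠ 0) : ⟪a,a⟫ ≠ 0 :=
  fun h => ha ((@inner_self_eq_zero ℝ _ _ _ _ a).mp h)

lemma refl_orth {a : EuclideanSpace ℝ (Fin n)} (ha : a ≠ 0) (v v' : EuclideanSpace ℝ (Fin n)) :
    ⟪v - (2 * ⟪a, v⟫ / ⟪a, a⟫) • a, v' - (2 * ⟪a, v'⟫ / ⟪a, a⟫) • a⟫ = ⟪v, v'⟫ := by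
  have h := inner_sq_ne ha
  simp only [inner_sub_left, inner_sub_right, real_inner_smul_left, real_inner_smul_right]
  rw [real_inner_comm v a, real_inner_comm v' a]
  set K : ℝ := ⟪a,a⟫ with hK
  set p : ℝ := ⟪a,v⟫ with hp
  set q : ℝ := ⟪a,v'⟫ with hq
  field_simp
  ring

lemma refl_invol {a : EuclideanSpace ℝ (Fin n)} (ha : a ≠ 0)
    (g : EuclideanSpace ℝ (Fin n) ≃ₗ[ℝ] EuclideanSpace ℝ (Fin n))
    (hg : ∀ v, g v = v - (2 * ⟪a, v⟫ / ⟪a, a⟫) • a) : ∀ v, g⁻¹ v = g v := by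
  have h := inner_sq_ne ha
  have key : ∀ v, g (g v) = v := by
    intro v
    rw [hg, hg, inner_sub_right, real_inner_smul_right]
    set K : ℝ := ⟪a,a⟫ with hK
    set p : ℝ := ⟪a,v⟫ with hp
    have hs : 2 * (p - 2 * p / K * K) / K = -(2 * p / K) := by
      field_simp
      ring
    rw [hs]
    module
  intro v
  calc g⁻¹ v = g⁻¹ (g (g v)) := by rw [key]
  _ = g v := g.symm_apply_apply _

lemma weyl_props {w} (hw : w ∈ S.weyl) :
    (∀ v v' : EuclideanSpace ℝ (Fin n), ⟪w v, w v'⟫ = ⟪v, v'⟫) ∧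
    (∀ a ∈ S.roots, w a ∈ S.roots) ∧ (∀ a ∈ S.roots, w⁻¹ a ∈ S.roots) := by
  induction hw using Subgroup.closure_induction with
  | mem g hg =>
    obtain ⟨a, ha, hga⟩ := hg
    have ha0 := S.ne_zero a ha
    have horth : ∀ v v', ⟪g v, g v'⟫ = ⟪v,v'⟫ := by
      intro v v'; rw [hga, hga]; exact refl_orth ha0 v v'
    have hinv := refl_invol ha0 g hga
    have hroots : ∀ b ∈ S.roots, g b ∈ S.roots := by
      intro b hb; rw [hga]; exact S.refl_mem a ha b hb
    exact ⟨horth, hroots, fun b hb => by rw [hinv]; exact hroots b hb⟩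
  | one => exact ⟨fun v v' => rfl, fun a ha => ha, fun a ha => by rw [inv_one]; exact ha⟩
  | mul x y hx hy ihx ihy =>
    refine ⟨fun v v' => ?_, fun a ha => ihx.2.1 _ (ihy.2.1 a ha), fun a ha => ?_⟩
    · rw [show (x*y) v = x (y v) from rfl, show (x*y) v' = x (y v') from rfl, ihx.1, ihy.1]
    · rw [show (x*y)⁻¹ a = y⁻¹ (x⁻¹ a) from rfl]; exact ihy.2.2 _ (ihx.2.2 a ha)
  | inv x hx ih =>
    refine ⟨fun v v' => ?_, ih.2.2, fun a ha => by rw [inv_inv]; exact ih.2.1 a ha⟩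
    calc ⟪x⁻¹ v, x⁻¹ v'⟫ = ⟪x (x⁻¹ v), x (x⁻¹ v')⟫ := (ih.1 _ _).symm
    _ = ⟪v, v'⟫ := by
        rw [show x (x⁻¹ v) = v from x.apply_symm_apply v,
          show x (x⁻¹ v') = v' from x.apply_symm_apply v']

lemma leviWeyl_le : leviWeyl S J ≤ S.weyl := by
  apply (Subgroup.closure_le _).mpr
  rintro g ⟨a, ha, hga⟩
  apply Subgroup.subset_closure
  exact ⟨a, (Finset.mem_filter.mp ha).1, hga⟩

lemma coeff_zero {f : EuclideanSpace ℝ (Fin n) → ℝ}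
    (h : ∑ s ∈ S.simples, f s • s = 0) : ∀ s ∈ S.simples, f s = 0 := by
  have key := Fintype.linearIndependent_iff.mp S.simples_indep
    (fun i : {x // x ∈ S.simples} => f i)
  intro s hs
  have h2 : ∑ i : {x // x ∈ S.simples}, f i • (i : EuclideanSpace ℝ (Fin n)) = 0 := by
    rw [Finset.sum_coe_sort S.simples (fun s => f s • s)]; exact h
  exact key h2 ⟨s, hs⟩

lemma mem_pos_of_rep {x : EuclideanSpace ℝ (Fin n)} (hx : x ∈ S.roots)
    {f : EuclideanSpace ℝ (Fin n) → ℝ} (hrep : x = ∑ s ∈ S.simples, f s • s)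
    {s₀ : EuclideanSpace ℝ (Fin n)} (hs₀ : s₀ ∈ S.simples) (hpos : 0 < f s₀) : x ∈ S.pos := by
  have hx' := hx; rw [S.union_eq, Finset.mem_union] at hx'
  rcases hx' with h | h
  · exact h
  · exfalso
    obtain ⟨p, hp, hpx⟩ := Finset.mem_image.mp h
    obtain ⟨c, hc⟩ := S.pos_comb p hp
    have hsum : ∑ s ∈ S.simples, (f s + (c s : ℝ)) • s = 0 := by
      simp only [add_smul, Finset.sum_add_distrib]
      rw [← hrep, ← hc, ← hpx]
      abel
    have h0 := coeff_zero hsum s₀ hs₀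
    have : (0:ℝ) ≤ (c s₀ : ℝ) := Nat.cast_nonneg _
    linarith

lemma exists_pos_coeff {b : EuclideanSpace ℝ (Fin n)} (hb : b ∈ S.pos)
    (hbJ : b ∉ Submodule.span ℝ (J : Set (EuclideanSpace ℝ (Fin n)))) :
    ∃ m : EuclideanSpace ℝ (Fin n) → ℕ, b = ∑ s ∈ S.simples, (m s : ℝ) • s ∧
      ∃ s₀ ∈ S.simples, s₀ ∉ J ∧ 0 < m s₀ := by
  obtain ⟨m, hm⟩ := S.pos_comb b hb
  refine ⟨m, hm, ?_⟩
  by_contra hcon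
  push_neg at hcon
  apply hbJ
  rw [hm]
  apply Submodule.sum_mem
  intro s hs
  by_cases hsJ : s ∈ J
  · exact Submodule.smul_mem _ _ (Submodule.subset_span hsJ)
  · have h0 : m s = 0 := by have := hcon s hs hsJ; omega
    simp [h0]

lemma refl_levi_props (hJ : J ⊆ S.simples) {c : EuclideanSpace ℝ (Fin n)}
    (hc : c ∈ leviRoots S J) :
    (∀ b ∈ leviRoots S J, b - (2*⟪c,b⟫/⟪c,c⟫)•c ∈ leviRoots S J) ∧
    (∀ a ∈ S.pos, a ∉ leviRoots S J →
      (a - (2*⟪c,a⟫/⟪c,c⟫)•c ∈ S.pos ∧ a - (2*⟪c,a⟫/⟪c,c⟫)•c ∉ leviRoots S J)) := by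
  obtain ⟨hcR, hcJ⟩ := Finset.mem_filter.mp hc
  constructor
  · intro b hb
    obtain ⟨hbR, hbJ⟩ := Finset.mem_filter.mp hb
    refine Finset.mem_filter.mpr ⟨S.refl_mem c hcR b hbR, ?_⟩
    exact Submodule.sub_mem _ hbJ (Submodule.smul_mem _ _ hcJ)
  · intro a ha haL
    have haR := S.pos_subset ha
    have haJ : a ∉ Submodule.span ℝ (J : Set (EuclideanSpace ℝ (Fin n))) := by
      intro h; exact haL (Finset.mem_filter.mpr ⟨haR, h⟩)
    set k : ℝ := 2*⟪c,a⟫/⟪c,c⟫ with hk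
    have hgaR : a - k•c ∈ S.roots := S.refl_mem c hcR a haR
    have hgaJ : a - k•c ∉ Submodule.span ℝ (J : Set (EuclideanSpace ℝ (Fin n))) := by
      intro h
      apply haJ
      have : a = (a - k•c) + k•c := by abel
      rw [this]
      exact Submodule.add_mem _ h (Submodule.smul_mem _ _ hcJ)
    refine ⟨?_, fun h => hgaJ (Finset.mem_filter.mp h).2⟩
    obtain ⟨m, hm, s₀, hs₀, hs₀J, hms₀⟩ := exists_pos_coeff ha haJ
    obtain ⟨t, -, ht⟩ := Submodule.mem_span_finset.mp hcJ
    have hcsum : ∑ s ∈ S.simples, (if s ∈ J then t s else 0) • s = c := by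
      rw [← Finset.sum_subset hJ (fun x _ hx => by simp [hx])]
      rw [← ht]
      exact Finset.sum_congr rfl fun x hx => by simp [hx]
    have hrep : a - k•c = ∑ s ∈ S.simples,
        ((m s : ℝ) - k * (if s ∈ J then t s else 0)) • s := by
      simp only [sub_smul, Finset.sum_sub_distrib, mul_smul]
      rw [← hm, ← Finset.smul_sum, hcsum]
    refine mem_pos_of_rep hgaR hrep hs₀ ?_
    simp only [hs₀J, if_false, mul_zero, sub_zero]
    exact_mod_cast hms₀

lemma leviWeyl_props {u} (hJ : J ⊆ S.simples) (hu : u ∈ leviWeyl S J) :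
    (∀ b ∈ leviRoots S J, u b ∈ leviRoots S J) ∧
    (∀ b ∈ leviRoots S J, u⁻¹ b ∈ leviRoots S J) ∧
    (∀ a ∈ S.pos, a ∉ leviRoots S J → u a ∈ S.pos ∧ u a ∉ leviRoots S J) ∧
    (∀ a ∈ S.pos, a ∉ leviRoots S J → u⁻¹ a ∈ S.pos ∧ u⁻¹ a ∉ leviRoots S J) := by
  induction hu using Subgroup.closure_induction with
  | mem g hg =>
    obtain ⟨c, hc, hgc⟩ := hg
    have hc0 := S.ne_zero c (Finset.mem_filter.mp hc).1
    have hinv := refl_invol hc0 g hgc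
    obtain ⟨h1, h2⟩ := refl_levi_props hJ hc
    have hL : ∀ b ∈ leviRoots S J, g b ∈ leviRoots S J := fun b hb => by
      rw [hgc]; exact h1 b hb
    have hP : ∀ a ∈ S.pos, a ∉ leviRoots S J → g a ∈ S.pos ∧ g a ∉ leviRoots S J :=
      fun a ha haL => by rw [hgc]; exact h2 a ha haL
    exact ⟨hL, fun b hb => by rw [hinv]; exact hL b hb,
      hP, fun a ha haL => by rw [hinv]; exact hP a ha haL⟩
  | one => exact ⟨fun b hb => hb, fun b hb => by rw [inv_one]; exact hb,
      fun a ha haL => ⟨ha, haL⟩, fun a ha haL => by rw [inv_one]; exact ⟨ha, haL⟩⟩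
  | mul x y hx hy ihx ihy =>
    refine ⟨fun b hb => ihx.1 _ (ihy.1 b hb),
      fun b hb => ?_,
      fun a ha haL => by
        have := ihy.2.2.1 a ha haL
        exact ihx.2.2.1 _ this.1 this.2,
      fun a ha haL => ?_⟩
    · rw [show (x*y)⁻¹ b = y⁻¹ (x⁻¹ b) from rfl]
      exact ihy.2.1 _ (ihx.2.1 b hb)
    · rw [show (x*y)⁻¹ a = y⁻¹ (x⁻¹ a) from rfl]
      have := ihx.2.2.2 a ha haL
      exact ihy.2.2.2 _ this.1 this.2
  | inv x hx ih =>
    exact ⟨ih.2.1, fun b hb => by rw [inv_inv]; exact ih.1 b hb,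
      ih.2.2.2, fun a ha haL => by rw [inv_inv]; exact ih.2.2.1 a ha haL⟩

lemma inner_eq_sum (x y : EuclideanSpace ℝ (Fin n)) : ⟪x,y⟫ = ∑ i, x i * y i := by
  simp [PiLp.inner_apply, RCLike.inner_apply]
  exact Finset.sum_congr rfl fun i _ => mul_comm _ _

lemma ev_cpx (w : EuclideanSpace ℝ (Fin n) ≃ₗ[ℝ] EuclideanSpace ℝ (Fin n))
    (horth : ∀ v v', ⟪w v, w v'⟫ = ⟪v,v'⟫) (b : EuclideanSpace ℝ (Fin n)) (l : Fin n → ℂ) :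
    ev b (cpx w l) = ev (w⁻¹ b) l := by
  have key : ∀ j, (∑ i, (b i:ℂ) * ((w (EuclideanSpace.single j 1)) i : ℂ)) = ((w⁻¹ b) j : ℂ) := by
    intro j
    have h1 : ⟪b, w (EuclideanSpace.single j 1)⟫ = (w⁻¹ b) j := by
      calc ⟪b, w (EuclideanSpace.single j 1)⟫
          = ⟪w (w⁻¹ b), w (EuclideanSpace.single j 1)⟫ := by
            rw [show w (w⁻¹ b) = b from w.apply_symm_apply b]
      _ = ⟪w⁻¹ b, EuclideanSpace.single j 1⟫ := horth _ _
      _ = (w⁻¹ b) j := by simp [EuclideanSpace.inner_single_right]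
    rw [← h1, inner_eq_sum]
    push_cast
    rfl
  unfold ev cpx
  simp only [Finset.mul_sum]
  rw [Finset.sum_comm]
  refine Finset.sum_congr rfl fun j _ => ?_
  simp only [← mul_assoc]
  rw [← Finset.sum_mul, key j]

lemma co_neg (a : EuclideanSpace ℝ (Fin n)) : co (-a) = - co a := by
  unfold co
  rw [inner_neg_neg, smul_neg]

lemma co_map (w : EuclideanSpace ℝ (Fin n) ≃ₗ[ℝ] EuclideanSpace ℝ (Fin n))
    (horth : ∀ v v', ⟪w v, w v'⟫ = ⟪v,v'⟫) (a : EuclideanSpace ℝ (Fin n)) :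
    co (w a) = w (co a) := by
  unfold co
  rw [horth a a, map_smul]

lemma ev_neg (b : EuclideanSpace ℝ (Fin n)) (l : Fin n → ℂ) : ev (-b) l = - ev b l := by
  unfold ev
  rw [← Finset.sum_neg_distrib]
  refine Finset.sum_congr rfl fun i _ => ?_
  have : (-b) i = -(b i) := rfl
  rw [this]
  push_cast
  ring

lemma root_dichotomy {a : EuclideanSpace ℝ (Fin n)} (ha : a ∈ S.roots) :
    a ∈ S.pos ∨ -a ∈ S.pos := by
  rw [S.union_eq, Finset.mem_union] at ha
  rcases ha with h | h
  · exact Or.inl h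
  · obtain ⟨b, hb, hba⟩ := Finset.mem_image.mp h
    right; rw [← hba, neg_neg]; exact hb

lemma mem_invSet_iff {w : EuclideanSpace ℝ (Fin n) ≃ₗ[ℝ] EuclideanSpace ℝ (Fin n)}
    (hroots : ∀ a ∈ S.roots, w a ∈ S.roots) {a : EuclideanSpace ℝ (Fin n)} (ha : a ∈ S.pos) :
    a ∈ invSet S w ↔ w a ∉ S.pos := by
  unfold invSet
  rw [Finset.mem_filter]
  constructor
  · rintro ⟨-, hmem⟩ hpos
    obtain ⟨b, hb, hba⟩ := Finset.mem_image.mp hmem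
    exact S.pos_neg_disj _ hpos (by rw [← hba, neg_neg]; exact hb)
  · intro hnot
    refine ⟨ha, Finset.mem_image.mpr ⟨-(w a), ?_, by simp⟩⟩
    rcases root_dichotomy (hroots a (S.pos_subset ha)) with h | h
    · exact absurd h hnot
    · exact h

lemma prod_split (T : Finset (EuclideanSpace ℝ (Fin n)))
    (w : EuclideanSpace ℝ (Fin n) ≃ₗ[ℝ] EuclideanSpace ℝ (Fin n))
    (hA : ∀ a ∈ T, w⁻¹ a ∈ T ∨ -(w⁻¹ a) ∈ T)
    (hB : ∀ a ∈ T, w a ∈ T ∨ -(w a) ∈ T)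
    (hC : ∀ a ∈ T, -a ∉ T)
    (F : EuclideanSpace ℝ (Fin n) → ℂ) :
    ∏ a ∈ T, F (w⁻¹ a) =
      (∏ a ∈ T.filter (fun b => w b ∈ T), F a) *
      (∏ a ∈ T.filter (fun b => w b ∉ T), F (-a)) := by
  rw [← Finset.prod_filter_mul_prod_filter_not T (fun a => w⁻¹ a ∈ T)]
  congr 1
  · refine Finset.prod_nbij (fun a => w⁻¹ a) ?_ ?_ ?_ ?_
    · intro a ha
      obtain ⟨haT, haT'⟩ := Finset.mem_filter.mp ha
      refine Finset.mem_filter.mpr ⟨haT', ?_⟩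
      show w (w.symm a) ∈ T
      rw [w.apply_symm_apply]; exact haT
    · intro a _ b _ hab
      exact w.symm.injective hab
    · intro b hb
      obtain ⟨hbT, hbT'⟩ := Finset.mem_filter.mp hb
      exact ⟨w b, Finset.mem_coe.mpr (Finset.mem_filter.mpr
        ⟨hbT', show w.symm (w b) ∈ T by rw [w.symm_apply_apply]; exact hbT⟩), w.symm_apply_apply b⟩
    · intro a _; rfl
  · refine Finset.prod_nbij (fun a => -(w⁻¹ a)) ?_ ?_ ?_ ?_
    · intro a ha
      obtain ⟨haT, haT'⟩ := Finset.mem_filter.mp ha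
      have h1 : -(w⁻¹ a) ∈ T := (hA a haT).resolve_left haT'
      refine Finset.mem_filter.mpr ⟨h1, ?_⟩
      have : w (-(w⁻¹ a)) = -a := by
        show w (-(w.symm a)) = -a
        rw [map_neg, w.apply_symm_apply]
      rw [this]
      exact hC a haT
    · intro a _ b _ hab
      exact w.symm.injective (neg_injective hab)
    · intro b hb
      obtain ⟨hbT, hbT'⟩ := Finset.mem_filter.mp hb
      have h1 : -(w b) ∈ T := (hB b hbT).resolve_left hbT'
      refine ⟨-(w b), Finset.mem_coe.mpr (Finset.mem_filter.mpr ⟨h1, ?_⟩), ?_⟩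
      · have : w⁻¹ (-(w b)) = -b := by
          rw [show w⁻¹ (-(w b)) = w.symm (-(w b)) from rfl, map_neg, w.symm_apply_apply]
        rw [this]
        exact hC b hbT
      · show -(w⁻¹ (-(w b))) = b
        rw [show w⁻¹ (-(w b)) = w.symm (-(w b)) from rfl, map_neg, w.symm_apply_apply, neg_neg]
    · intro a _
      show F (w⁻¹ a) = F (- (-(w⁻¹ a)))
      rw [neg_neg]

lemma neg_root {a : EuclideanSpace ℝ (Fin n)} (ha : a ∈ S.roots) : -a ∈ S.roots := by
  rcases root_dichotomy ha with h | h
  · rw [S.union_eq, Finset.mem_union]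
    exact Or.inr (Finset.mem_image.mpr ⟨a, h, rfl⟩)
  · exact S.pos_subset h

lemma neg_leviRoot {a : EuclideanSpace ℝ (Fin n)} (ha : a ∈ leviRoots S J) :
    -a ∈ leviRoots S J := by
  obtain ⟨h1, h2⟩ := Finset.mem_filter.mp ha
  exact Finset.mem_filter.mpr ⟨neg_root h1, Submodule.neg_mem _ h2⟩

lemma prod_split_pos {w : EuclideanSpace ℝ (Fin n) ≃ₗ[ℝ] EuclideanSpace ℝ (Fin n)}
    (hw : w ∈ S.weyl) (F : EuclideanSpace ℝ (Fin n) → ℂ) :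
    ∏ a ∈ S.pos, F (w⁻¹ a) =
      (∏ a ∈ S.pos \ invSet S w, F a) * (∏ a ∈ invSet S w, F (-a)) := by
  obtain ⟨horth, hroots, hroots'⟩ := weyl_props hw
  rw [prod_split S.pos w
    (fun a ha => root_dichotomy (hroots' a (S.pos_subset ha)))
    (fun a ha => root_dichotomy (hroots a (S.pos_subset ha)))
    S.pos_neg_disj F]
  congr 1
  · apply Finset.prod_congr _ (fun _ _ => rfl)
    ext a
    rw [Finset.mem_filter, Finset.mem_sdiff]
    constructor
    · rintro ⟨h1, h2⟩
      exact ⟨h1, fun h => ((mem_invSet_iff hroots h1).mp h) h2⟩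
    · rintro ⟨h1, h2⟩
      refine ⟨h1, ?_⟩
      by_contra h
      exact h2 ((mem_invSet_iff hroots h1).mpr h)
  · apply Finset.prod_congr _ (fun _ _ => rfl)
    ext a
    rw [Finset.mem_filter]
    constructor
    · rintro ⟨h1, h2⟩
      exact (mem_invSet_iff hroots h1).mpr h2
    · intro h
      have h1 : a ∈ S.pos := Finset.mem_of_mem_filter a h
      exact ⟨h1, (mem_invSet_iff hroots h1).mp h⟩

lemma mem_leviPos_iff {a : EuclideanSpace ℝ (Fin n)} :
    a ∈ leviPos S J ↔ a ∈ S.pos ∧ a ∈ leviRoots S J := Finset.mem_inter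

lemma invSet_subset_leviPos (hJ : J ⊆ S.simples)
    {u : EuclideanSpace ℝ (Fin n) ≃ₗ[ℝ] EuclideanSpace ℝ (Fin n)} (hu : u ∈ leviWeyl S J) :
    invSet S u ⊆ leviPos S J := by
  intro a ha
  have hroots := (weyl_props (leviWeyl_le hu)).2.1
  have h1 : a ∈ S.pos := Finset.mem_of_mem_filter a ha
  have h2 : u a ∉ S.pos := (mem_invSet_iff hroots h1).mp ha
  refine mem_leviPos_iff.mpr ⟨h1, ?_⟩
  by_contra hL
  exact h2 ((leviWeyl_props hJ hu).2.2.1 a h1 hL).1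

lemma prod_split_levi (hJ : J ⊆ S.simples)
    {u : EuclideanSpace ℝ (Fin n) ≃ₗ[ℝ] EuclideanSpace ℝ (Fin n)} (hu : u ∈ leviWeyl S J)
    (F : EuclideanSpace ℝ (Fin n) → ℂ) :
    ∏ a ∈ leviPos S J, F (u⁻¹ a) =
      (∏ a ∈ leviPos S J \ invSet S u, F a) * (∏ a ∈ invSet S u, F (-a)) := by
  have hW := leviWeyl_le hu
  obtain ⟨horth, hroots, hroots'⟩ := weyl_props hW
  obtain ⟨hL1, hL2, hL3, hL4⟩ := leviWeyl_props hJ hu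
  have hA : ∀ a ∈ leviPos S J, u⁻¹ a ∈ leviPos S J ∨ -(u⁻¹ a) ∈ leviPos S J := by
    intro a ha
    obtain ⟨h1, h2⟩ := mem_leviPos_iff.mp ha
    have hr : u⁻¹ a ∈ leviRoots S J := hL2 a h2
    rcases root_dichotomy (hroots' a (S.pos_subset h1)) with h | h
    · exact Or.inl (mem_leviPos_iff.mpr ⟨h, hr⟩)
    · exact Or.inr (mem_leviPos_iff.mpr ⟨h, neg_leviRoot hr⟩)
  have hB : ∀ a ∈ leviPos S J, u a ∈ leviPos S J ∨ -(u a) ∈ leviPos S J := by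
    intro a ha
    obtain ⟨h1, h2⟩ := mem_leviPos_iff.mp ha
    have hr : u a ∈ leviRoots S J := hL1 a h2
    rcases root_dichotomy (hroots a (S.pos_subset h1)) with h | h
    · exact Or.inl (mem_leviPos_iff.mpr ⟨h, hr⟩)
    · exact Or.inr (mem_leviPos_iff.mpr ⟨h, neg_leviRoot hr⟩)
  have hC : ∀ a ∈ leviPos S J, -a ∉ leviPos S J := by
    intro a ha h
    exact S.pos_neg_disj a (mem_leviPos_iff.mp ha).1 (mem_leviPos_iff.mp h).1
  rw [prod_split (leviPos S J) u hA hB hC F]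
  congr 1
  · apply Finset.prod_congr _ (fun _ _ => rfl)
    ext a
    rw [Finset.mem_filter, Finset.mem_sdiff]
    constructor
    · rintro ⟨h1, h2⟩
      refine ⟨h1, fun h => ?_⟩
      exact (mem_invSet_iff hroots (mem_leviPos_iff.mp h1).1).mp h (mem_leviPos_iff.mp h2).1
    · rintro ⟨h1, h2⟩
      obtain ⟨hp, hLr⟩ := mem_leviPos_iff.mp h1
      refine ⟨h1, mem_leviPos_iff.mpr ⟨?_, hL1 a hLr⟩⟩
      by_contra h
      exact h2 ((mem_invSet_iff hroots hp).mpr h)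
  · apply Finset.prod_congr _ (fun _ _ => rfl)
    ext a
    rw [Finset.mem_filter]
    constructor
    · rintro ⟨h1, h2⟩
      obtain ⟨hp, hLr⟩ := mem_leviPos_iff.mp h1
      refine (mem_invSet_iff hroots hp).mpr (fun h => ?_)
      exact h2 (mem_leviPos_iff.mpr ⟨h, hL1 a hLr⟩)
    · intro h
      have h1 : a ∈ leviPos S J := invSet_subset_leviPos hJ hu h
      have hp := (mem_leviPos_iff.mp h1).1
      exact ⟨h1, fun hh => (mem_invSet_iff hroots hp).mp h (mem_leviPos_iff.mp hh).1⟩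
set_option maxHeartbeats 1000000

/-- for every `u ∈ W'`, every `d ∈ W` and every `λ ∈ V_ℂ` such that
`α̂(λ) ≠ 0` and `ρ(α̂(λ)) ≠ 0` for every coroot `α̂ ∈ R̂`, one has
`c'(udλ)·r(udλ)/r(λ) = ∏_{α̂ ∈ d⁻¹(R̂(u))} (α̂(λ)−1)/α̂(λ)
  · ∏_{β̂ ∈ d⁻¹(R̂'₊∖R̂(u))} (β̂(λ)+1)/β̂(λ) · ∏_{γ̂ ∈ R̂(ud)} ρ(γ̂(λ)+1)/ρ(γ̂(λ))`. -/
theorem statement10 (n : ℕ) (S : RootData n) (J : Finset (EuclideanSpace ℝ (Fin n)))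
    (hJ : J ⊆ S.simples) (ρ : ℂ → ℂ) (hρ : ∀ s : ℂ, ρ s = ρ (1 - s))
    (u d : EuclideanSpace ℝ (Fin n) ≃ₗ[ℝ] EuclideanSpace ℝ (Fin n))
    (hu : u ∈ leviWeyl S J) (hd : d ∈ S.weyl)
    (l : Fin n → ℂ)
    (h0 : ∀ a ∈ S.roots, ev (co a) l ≠ 0)
    (hρ0 : ∀ a ∈ S.roots, ρ (ev (co a) l) ≠ 0) :
    cfunLevi S J (cpx (u * d) l) * (rfun S ρ (cpx (u * d) l) / rfun S ρ l) =
      (∏ a ∈ (invSet S u).image (fun b => d.symm b), (ev (co a) l - 1) / ev (co a) l) *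
      (∏ a ∈ (leviPos S J \ invSet S u).image (fun b => d.symm b),
          (ev (co a) l + 1) / ev (co a) l) *
      (∏ a ∈ invSet S (u * d), ρ (ev (co a) l + 1) / ρ (ev (co a) l)) := by

  have hw : u * d ∈ S.weyl := mul_mem (leviWeyl_le hu) hd
  obtain ⟨horth, hroots, hroots'⟩ := weyl_props hw
  have horthinv : ∀ v v', ⟪(u*d)⁻¹ v, (u*d)⁻¹ v'⟫ = ⟪v,v'⟫ := (weyl_props (inv_mem hw)).1
  have hev : ∀ a : EuclideanSpace ℝ (Fin n), ev (co a) (cpx (u*d) l) = ev (co ((u*d)⁻¹ a)) l := by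
    intro a
    rw [ev_cpx (u*d) horth, ← co_map ((u*d)⁻¹) horthinv]
  have hrprod : rfun S ρ (cpx (u*d) l) =
      (∏ a ∈ S.pos \ invSet S (u*d), ρ (ev (co a) l)) *
      (∏ a ∈ invSet S (u*d), ρ (ev (co a) l + 1)) := by
    unfold rfun
    calc ∏ a ∈ S.pos, ρ (ev (co a) (cpx (u*d) l))
        = ∏ a ∈ S.pos, (fun b => ρ (ev (co b) l)) ((u*d)⁻¹ a) :=
          Finset.prod_congr rfl fun a _ => by rw [hev]
    _ = (∏ a ∈ S.pos \ invSet S (u*d), ρ (ev (co a) l)) *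
        (∏ a ∈ invSet S (u*d), ρ (ev (co (-a)) l)) := prod_split_pos hw (fun b => ρ (ev (co b) l))
    _ = _ := by
        congr 1
        refine Finset.prod_congr rfl fun a _ => ?_
        rw [co_neg, ev_neg, hρ (-(ev (co a) l)), sub_neg_eq_add, add_comm]
  have hinvsub : invSet S (u*d) ⊆ S.pos := Finset.filter_subset _ _
  have hA : (∏ a ∈ S.pos \ invSet S (u*d), ρ (ev (co a) l)) ≠ 0 :=
    Finset.prod_ne_zero_iff.mpr fun a ha =>
      hρ0 a (S.pos_subset (Finset.mem_sdiff.mp ha).1)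
  have hr : rfun S ρ (cpx (u*d) l) / rfun S ρ l =
      ∏ a ∈ invSet S (u*d), ρ (ev (co a) l + 1) / ρ (ev (co a) l) := by
    have h2 : rfun S ρ l =
        (∏ a ∈ S.pos \ invSet S (u*d), ρ (ev (co a) l)) *
        (∏ a ∈ invSet S (u*d), ρ (ev (co a) l)) := by
      unfold rfun
      exact (Finset.prod_sdiff hinvsub).symm
    rw [hrprod, h2, Finset.prod_div_distrib, mul_div_mul_left _ _ hA]
  have hcprod : cfunLevi S J (cpx (u*d) l) =
      (∏ a ∈ leviPos S J \ invSet S u, (ev (co (d⁻¹ a)) l + 1) / (ev (co (d⁻¹ a)) l)) *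
      (∏ a ∈ invSet S u, (ev (co (d⁻¹ a)) l - 1) / (ev (co (d⁻¹ a)) l)) := by
    unfold cfunLevi
    calc ∏ a ∈ leviPos S J, (ev (co a) (cpx (u*d) l) + 1) / ev (co a) (cpx (u*d) l)
        = ∏ a ∈ leviPos S J, (fun b => (ev (co (d⁻¹ b)) l + 1) / (ev (co (d⁻¹ b)) l)) (u⁻¹ a) := by
          refine Finset.prod_congr rfl fun a _ => ?_
          rw [hev]
          have h2 : (u*d)⁻¹ a = d⁻¹ (u⁻¹ a) := by rw [mul_inv_rev]; rfl
          rw [h2]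
    _ = (∏ a ∈ leviPos S J \ invSet S u, (ev (co (d⁻¹ a)) l + 1) / (ev (co (d⁻¹ a)) l)) *
        (∏ a ∈ invSet S u, (ev (co (d⁻¹ (-a))) l + 1) / (ev (co (d⁻¹ (-a))) l)) :=
          prod_split_levi hJ hu (fun b => (ev (co (d⁻¹ b)) l + 1) / (ev (co (d⁻¹ b)) l))
    _ = _ := by
        congr 1
        refine Finset.prod_congr rfl fun a _ => ?_
        have h1 : d⁻¹ (-a) = -(d⁻¹ a) := map_neg _ a
        rw [h1, co_neg, ev_neg]
        rw [show -(ev (co (d⁻¹ a)) l) + 1 = -(ev (co (d⁻¹ a)) l - 1) by ring,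
          show -(ev (co (d⁻¹ a)) l) = -(ev (co (d⁻¹ a)) l) from rfl, neg_div_neg_eq]
  have himg1 : (∏ a ∈ (invSet S u).image (fun b => d.symm b), (ev (co a) l - 1) / ev (co a) l)
      = ∏ a ∈ invSet S u, (ev (co (d⁻¹ a)) l - 1) / (ev (co (d⁻¹ a)) l) := by
    rw [Finset.prod_image (fun x _ y _ h => d.symm.injective h)]
    rfl
  have himg2 : (∏ a ∈ (leviPos S J \ invSet S u).image (fun b => d.symm b),
        (ev (co a) l + 1) / ev (co a) l)
      = ∏ a ∈ leviPos S J \ invSet S u, (ev (co (d⁻¹ a)) l + 1) / (ev (co (d⁻¹ a)) l) := by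
    rw [Finset.prod_image (fun x _ y _ h => d.symm.injective h)]
    rfl
  rw [hr, hcprod, himg1, himg2]
  ring

end RootData
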